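/- arXiv:2112.12097 — 2 statements merged into one kernel-verified Lean document; each statement's English description precedes it below -/
import Mathlib

section
/- Fix k ≥ 2. If P : C[0,π] → C[0,π] is a continuous linear operator with P(C₀[0,π]) ⊆ C₀[0,π], then for every f ∈ C(S^k) the function P^# f is continuous on S^k; that is, P^# maps C(S^k) into C(S^k). -/
open MeasureTheory Matrix Metric Real
open scoped RealInnerProductSpace ENNReal
noncomputable section

abbrev Eucl (d : ℕ) : Type := EuclideanSpace ℝ (Fin d)
abbrev Sph (d : ℕ) := Metric.sphere (0 : Eucl d) 1

/-- The north pole `1^k = (0,…,0,1)` of the sphere `S^k ⊆ ℝ^{k+1}`. -/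
def npole (m : ℕ) : Sph (m + 1) :=
  ⟨EuclideanSpace.single (Fin.last m) (1 : ℝ), by simp⟩

/-- The south pole `-1^k = (0,…,0,-1)`. -/
def spole (m : ℕ) : Sph (m + 1) :=
  ⟨EuclideanSpace.single (Fin.last m) (-1 : ℝ), by simp⟩

lemma sphere_sum_sq {d : ℕ} (y : Sph d) : ∑ i : Fin d, (y.1 i) ^ 2 = 1 := by
  have hy : ‖y.1‖ = 1 := by simpa using y.2
  rw [EuclideanSpace.norm_eq] at hy
  have h' : Real.sqrt (∑ i, ‖y.1 i‖ ^ 2) ^ 2 = 1 := by rw [hy]; norm_num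
  rw [Real.sq_sqrt (by positivity)] at h'
  simpa [Real.norm_eq_abs, sq_abs] using h'

lemma phi_mem {m : ℕ} (t : ℝ) (y : Sph (m + 1)) :
    (WithLp.equiv 2 (Fin (m + 2) → ℝ)).symm
      (Fin.snoc (fun i => Real.sin t * ((WithLp.equiv 2 (Fin (m + 1) → ℝ)) y.1) i) (Real.cos t))
      ∈ Metric.sphere (0 : Eucl (m + 2)) 1 := by
  rw [mem_sphere_iff_norm, sub_zero, EuclideanSpace.norm_eq]
  have hw : (∑ i : Fin (m + 2),
      ‖(WithLp.equiv 2 (Fin (m + 2) → ℝ)).symm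
        (Fin.snoc (fun i => Real.sin t * ((WithLp.equiv 2 (Fin (m + 1) → ℝ)) y.1) i)
          (Real.cos t)) i‖ ^ 2) = 1 := by
    simp only [WithLp.equiv_symm_apply, PiLp.toLp_apply, Real.norm_eq_abs, sq_abs]
    rw [Fin.sum_univ_castSucc]
    simp only [Fin.snoc_castSucc, Fin.snoc_last]
    have hmul : (∑ i : Fin (m + 1),
        (Real.sin t * ((WithLp.equiv 2 (Fin (m + 1) → ℝ)) y.1) i) ^ 2)
        = Real.sin t ^ 2 * ∑ i : Fin (m + 1), (y.1 i) ^ 2 := by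
      rw [Finset.mul_sum]
      refine Finset.sum_congr rfl fun i _ => ?_
      have : ((WithLp.equiv 2 (Fin (m + 1) → ℝ)) y.1) i = y.1 i := rfl
      rw [this]; ring
    rw [hmul, sphere_sum_sq, mul_one]
    exact Real.sin_sq_add_cos_sq t
  rw [hw]
  exact Real.sqrt_one

/-- The map `Φ_k(t, y) = (y sin t, cos t)` from `ℝ × S^{k-1}` to `S^k`. -/
def phi {m : ℕ} (t : ℝ) (y : Sph (m + 1)) : Sph (m + 2) :=
  ⟨(WithLp.equiv 2 (Fin (m + 2) → ℝ)).symm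
      (Fin.snoc (fun i => Real.sin t * ((WithLp.equiv 2 (Fin (m + 1) → ℝ)) y.1) i) (Real.cos t)),
    phi_mem t y⟩

/-- The latitude `t ∈ [0,π]` of a point on `S^k`, i.e. `arccos` of the last coordinate. -/
def lat {m : ℕ} (ξ : Sph (m + 2)) : ℝ := Real.arccos (ξ.1 (Fin.last (m + 1)))

lemma lat_mem_Icc {m : ℕ} (ξ : Sph (m + 2)) : lat ξ ∈ Set.Icc (0 : ℝ) π :=
  ⟨Real.arccos_nonneg _, Real.arccos_le_pi _⟩

/-- The "equatorial part" of a point of `S^k`: its first `k` coordinates. -/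
def eqpart {m : ℕ} (ξ : Sph (m + 2)) : Eucl (m + 1) :=
  (WithLp.equiv 2 (Fin (m + 1) → ℝ)).symm (fun i => ξ.1 i.castSucc)

open scoped Classical in
/-- The longitudinal direction of a point of `S^k`, an element of `S^{k-1}`; at the poles it is
(by convention) the north pole `1^{k-1}` of `S^{k-1}`. -/
def ydir {m : ℕ} (ξ : Sph (m + 2)) : Sph (m + 1) :=
  if h : eqpart ξ = 0 then npole m
  else ⟨‖eqpart ξ‖⁻¹ • eqpart ξ, by
    rw [mem_sphere_iff_norm, sub_zero, norm_smul, norm_inv, norm_norm,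
      inv_mul_cancel₀ (norm_ne_zero_iff.mpr h)]⟩

lemma continuous_phi_left {m : ℕ} (y : Sph (m + 1)) :
    Continuous fun t : ℝ => (phi t y : Sph (m + 2)) := by
  apply Continuous.subtype_mk
  refine (PiLp.continuous_toLp 2 (fun _ : Fin (m + 2) => ℝ)).comp ?_
  apply continuous_pi
  intro j
  refine Fin.lastCases ?_ ?_ j
  · simpa [Fin.snoc_last] using Real.continuous_cos
  · intro i
    simp only [Fin.snoc_castSucc]
    exact Real.continuous_sin.mul continuous_const

lemma continuous_phi_right {m : ℕ} (t : ℝ) :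
    Continuous fun y : Sph (m + 1) => (phi t y : Sph (m + 2)) := by
  apply Continuous.subtype_mk
  refine (PiLp.continuous_toLp 2 (fun _ : Fin (m + 2) => ℝ)).comp ?_
  apply continuous_pi
  intro j
  refine Fin.lastCases ?_ ?_ j
  · simpa [Fin.snoc_last] using continuous_const (y := Real.cos t)
  · intro i
    simp only [Fin.snoc_castSucc]
    exact continuous_const.mul
      ((continuous_apply i).comp ((PiLp.continuous_ofLp 2 (fun _ : Fin (m + 1) => ℝ)).comp
        continuous_subtype_val))

/-- The interval `[0,π]`. -/
abbrev IccPi : Set ℝ := Set.Icc (0 : ℝ) π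

/-- `0` as an element of `[0,π]`. -/
def loPt : IccPi := ⟨0, Set.left_mem_Icc.mpr Real.pi_nonneg⟩

/-- `π` as an element of `[0,π]`. -/
def hiPt : IccPi := ⟨π, Set.right_mem_Icc.mpr Real.pi_nonneg⟩

/-- The slice of a continuous function on `S^k` along the meridian through `y ∈ S^{k-1}`:
`t ↦ f(Φ_k(t,y))` as an element of `C[0,π]`. -/
def merid {m : ℕ} (f : C(Sph (m + 2), ℝ)) (y : Sph (m + 1)) : C(IccPi, ℝ) :=
  ⟨fun t => f (phi t.1 y), by
    exact f.continuous.comp ((continuous_phi_left y).comp continuous_subtype_val)⟩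

/-- The latitudinal operator `L^#` acting on continuous functions on `S^k`. -/
def latOp {m : ℕ} (L : C(IccPi, ℝ) →L[ℝ] C(IccPi, ℝ)) (f : C(Sph (m + 2), ℝ))
    (ξ : Sph (m + 2)) : ℝ :=
  L (merid f (ydir ξ)) ⟨lat ξ, lat_mem_Icc ξ⟩

/-- The reflection `t ↦ π - t` of `[0,π]`. -/
def reflI : C(IccPi, IccPi) :=
  ⟨fun t => ⟨π - t.1, ⟨by linarith [t.2.2], by linarith [t.2.1]⟩⟩,
    Continuous.subtype_mk (continuous_const.sub continuous_subtype_val) _⟩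

/-- The reflection operator `ρ g(t) = g(π - t)` on `C[0,π]`. -/
def reflOp : C(IccPi, ℝ) →L[ℝ] C(IccPi, ℝ) where
  toFun g := g.comp reflI
  map_add' g h := rfl
  map_smul' c g := rfl
  cont := ContinuousMap.continuous_precomp reflI

/-- The reflection of the sphere `S^k` changing the sign of the last coordinate. -/
def reflSph {m : ℕ} (ξ : Sph (m + 2)) : Sph (m + 2) :=
  ⟨(WithLp.equiv 2 (Fin (m + 2) → ℝ)).symm
      (Fin.snoc (fun i => ξ.1 i.castSucc) (-(ξ.1 (Fin.last (m + 1))))), by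
    rw [mem_sphere_iff_norm, sub_zero, EuclideanSpace.norm_eq]
    have hw : (∑ i : Fin (m + 2),
        ‖(WithLp.equiv 2 (Fin (m + 2) → ℝ)).symm
          (Fin.snoc (fun i => ξ.1 i.castSucc) (-(ξ.1 (Fin.last (m + 1))))) i‖ ^ 2) = 1 := by
      simp only [WithLp.equiv_symm_apply, PiLp.toLp_apply, Real.norm_eq_abs, sq_abs]
      rw [Fin.sum_univ_castSucc]
      simp only [Fin.snoc_castSucc, Fin.snoc_last, neg_sq]
      have h := sphere_sum_sq ξ
      rw [Fin.sum_univ_castSucc] at h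
      exact h
    rw [hw]
    exact Real.sqrt_one⟩

lemma continuous_reflSph {m : ℕ} : Continuous (reflSph (m := m)) := by
  apply Continuous.subtype_mk
  refine (PiLp.continuous_toLp 2 (fun _ : Fin (m + 2) => ℝ)).comp ?_
  apply continuous_pi
  intro j
  refine Fin.lastCases ?_ ?_ j
  · simp only [Fin.snoc_last]
    exact ((continuous_apply (Fin.last (m + 1))).comp
      ((PiLp.continuous_ofLp 2 (fun _ : Fin (m + 2) => ℝ)).comp continuous_subtype_val)).neg
  · intro i
    simp only [Fin.snoc_castSucc]
    exact (continuous_apply i.castSucc).comp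
      ((PiLp.continuous_ofLp 2 (fun _ : Fin (m + 2) => ℝ)).comp continuous_subtype_val)

/-- The reflection `ρ^#` as a continuous self-map of `S^k`. -/
def reflSphCM {m : ℕ} : C(Sph (m + 2), Sph (m + 2)) := ⟨reflSph, continuous_reflSph⟩

instance (d : ℕ) : MeasurableSpace (Matrix (Fin d) (Fin d) ℝ) :=
  inferInstanceAs (MeasurableSpace (Fin d → Fin d → ℝ))

/-- The special orthogonal group `SO(d)` as a subgroup of the orthogonal group. -/
def SOsub (d : ℕ) : Subgroup ↥(Matrix.orthogonalGroup (Fin d) ℝ) where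
  carrier := {A | Matrix.det (A : Matrix (Fin d) (Fin d) ℝ) = 1}
  one_mem' := by simp
  mul_mem' := by
    intro a b ha hb
    simp only [Set.mem_setOf_eq] at *
    rw [Matrix.UnitaryGroup.mul_val, Matrix.det_mul, ha, hb, mul_one]
  inv_mem' := by
    intro a ha
    simp only [Set.mem_setOf_eq] at *
    rw [Matrix.UnitaryGroup.inv_val, Matrix.star_eq_conjTranspose,
      show ((a : Matrix (Fin d) (Fin d) ℝ))ᴴ = (a : Matrix (Fin d) (Fin d) ℝ)ᵀ from rfl,
      Matrix.det_transpose, ha]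

/-- The special orthogonal group `SO(d)`. -/
abbrev SOg (d : ℕ) := ↥(SOsub d)

/-- The matrix of an element of `SO(d)`. -/
abbrev SOg.mat {d : ℕ} (b : SOg d) : Matrix (Fin d) (Fin d) ℝ :=
  ((b : ↥(Matrix.orthogonalGroup (Fin d) ℝ)) : Matrix (Fin d) (Fin d) ℝ)

lemma SOg.matT_mul {d : ℕ} (b : SOg d) : b.matᵀ * b.mat = 1 := by
  have h := (b : ↥(Matrix.orthogonalGroup (Fin d) ℝ)).2.1
  simpa [Matrix.star_eq_conjTranspose] using h

lemma mulVec_mem_sphere {d : ℕ} (b : SOg d) (x : Sph d) :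
    (WithLp.equiv 2 (Fin d → ℝ)).symm (b.mat.mulVec ((WithLp.equiv 2 (Fin d → ℝ)) x.1)) ∈
      Metric.sphere (0 : Eucl d) 1 := by
  have hx : ‖x.1‖ = 1 := by simpa using x.2
  rw [mem_sphere_iff_norm, sub_zero]
  have key : ∀ w : Eucl d,
      ‖w‖ ^ 2 = (WithLp.equiv 2 (Fin d → ℝ)) w ⬝ᵥ (WithLp.equiv 2 (Fin d → ℝ)) w := by
    intro w
    rw [EuclideanSpace.norm_eq, Real.sq_sqrt (by positivity)]
    simp [dotProduct, sq_abs, pow_two]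
  set v : Fin d → ℝ := (WithLp.equiv 2 (Fin d → ℝ)) x.1 with hv
  have hdot : (b.mat.mulVec v) ⬝ᵥ (b.mat.mulVec v) = v ⬝ᵥ v := by
    rw [Matrix.dotProduct_mulVec, ← Matrix.mulVec_transpose, Matrix.mulVec_mulVec, SOg.matT_mul,
      Matrix.one_mulVec]
  have h1 : ‖(WithLp.equiv 2 (Fin d → ℝ)).symm (b.mat.mulVec v)‖ ^ 2 = (1 : ℝ) := by
    rw [key, Equiv.apply_symm_apply, hdot, ← key, hx, one_pow]
  nlinarith [norm_nonneg ((WithLp.equiv 2 (Fin d → ℝ)).symm (b.mat.mulVec v))]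

/-- The rotation action of `SO(d)` on the sphere `S^{d-1}`. -/
def rot {d : ℕ} (b : SOg d) (x : Sph d) : Sph d :=
  ⟨(WithLp.equiv 2 (Fin d → ℝ)).symm (b.mat.mulVec ((WithLp.equiv 2 (Fin d → ℝ)) x.1)),
    mulVec_mem_sphere b x⟩

lemma continuous_rot {d : ℕ} (b : SOg d) : Continuous (rot b) := by
  apply Continuous.subtype_mk
  refine (PiLp.continuous_toLp 2 (fun _ : Fin d => ℝ)).comp ?_
  have : Continuous fun v : Fin d → ℝ => b.mat.mulVec v :=
    b.mat.mulVecLin.continuous_of_finiteDimensional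
  exact this.comp ((PiLp.continuous_ofLp 2 (fun _ : Fin d => ℝ)).comp continuous_subtype_val)

/-- Rotation as a continuous self-map of the sphere. -/
def rotCM {d : ℕ} (b : SOg d) : C(Sph d, Sph d) := ⟨rot b, continuous_rot b⟩

/-- The rotation operator `T_b f = f ∘ b⁻¹` on continuous functions on the sphere. -/
def Trot {d : ℕ} (b : SOg d) (f : C(Sph d, ℝ)) : C(Sph d, ℝ) := f.comp (rotCM b⁻¹)

/-- The rotation operator `T_b` on `L²` of the sphere. -/
def TrotL2 {d : ℕ} (σ : Measure (Sph d)) (hσ : ∀ b : SOg d, MeasurePreserving (rot b) σ σ)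
    (b : SOg d) : Lp ℝ 2 σ →L[ℝ] Lp ℝ 2 σ :=
  (Lp.compMeasurePreservingₗᵢ ℝ (rot b⁻¹) (hσ b⁻¹)).toContinuousLinearMap

/-- The latitude-`t` circle slice of a continuous function on `S^k`:
`y ↦ f(Φ_k(t,y))` as an element of `C(S^{k-1}, ℝ)`. -/
def ringSlice {m : ℕ} (f : C(Sph (m + 2), ℝ)) (t : ℝ) : C(Sph (m + 1), ℝ) :=
  ⟨fun y => f (phi t y), f.continuous.comp (continuous_phi_right t)⟩

open scoped Classical in
/-- The lifted operator `P̂` acting on functions on `S^k` (with value `0` at the poles,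
and defined via the latitude/longitude decomposition elsewhere). -/
def hatOp {m : ℕ} (P : C(Sph (m + 1), ℝ) →L[ℝ] C(Sph (m + 1), ℝ)) (g : Sph (m + 2) → ℝ)
    (ξ : Sph (m + 2)) : ℝ :=
  if ξ = npole (m + 1) ∨ ξ = spole (m + 1) then 0
  else if h : Continuous g then P (ringSlice ⟨g, h⟩ (lat ξ)) (ydir ξ) else 0

/-- The spherical coordinates `Ψ_n : ℝ^n → S^n` given recursively by `Ψ_1(t) = (sin t, cos t)`
and `Ψ_{n+1}(v, t) = (Ψ_n(v) sin t, cos t)`. -/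
def Psi : (n : ℕ) → (Fin n → ℝ) → Sph (n + 1)
  | 0, _ => npole 0
  | n + 1, v => phi (v (Fin.last n)) (Psi n (fun i => v i.castSucc))

/-- The patch `Ψ_n([a 0, b 0] × ⋯ × [a (n-1), b (n-1)]) ⊆ S^n`. -/
def patchSet (n : ℕ) (a b : Fin n → ℝ) : Set (Sph (n + 1)) :=
  Psi n '' {v | ∀ j, v j ∈ Set.Icc (a j) (b j)}

section LatOpAux

variable {m : ℕ}

/-- The latitude point as an element of `[0,π]`. -/
def latPt (ξ : Sph (m + 2)) : IccPi := ⟨lat ξ, lat_mem_Icc ξ⟩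

lemma continuous_last_coord : Continuous fun ξ : Sph (m + 2) => ξ.1 (Fin.last (m + 1)) :=
  (continuous_apply (Fin.last (m + 1))).comp
    ((PiLp.continuous_ofLp 2 (fun _ : Fin (m + 2) => ℝ)).comp continuous_subtype_val)

lemma continuous_latPt : Continuous (latPt (m := m)) :=
  Continuous.subtype_mk (Real.continuous_arccos.comp continuous_last_coord) _

lemma continuous_eqpart : Continuous (eqpart (m := m)) := by
  refine (PiLp.continuous_toLp 2 (fun _ : Fin (m + 1) => ℝ)).comp ?_
  exact continuous_pi fun i => (continuous_apply i.castSucc).comp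
    ((PiLp.continuous_ofLp 2 (fun _ : Fin (m + 2) => ℝ)).comp continuous_subtype_val)

lemma continuous_phi2 : Continuous fun p : Sph (m + 1) × IccPi => (phi p.2.1 p.1 : Sph (m + 2)) := by
  apply Continuous.subtype_mk
  refine (PiLp.continuous_toLp 2 (fun _ : Fin (m + 2) => ℝ)).comp ?_
  apply continuous_pi
  intro j
  refine Fin.lastCases ?_ ?_ j
  · simp only [Fin.snoc_last]
    exact Real.continuous_cos.comp (continuous_subtype_val.comp continuous_snd)
  · intro i
    simp only [Fin.snoc_castSucc]
    exact (Real.continuous_sin.comp (continuous_subtype_val.comp continuous_snd)).mul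
      ((continuous_apply i).comp ((PiLp.continuous_ofLp 2 (fun _ : Fin (m + 1) => ℝ)).comp
        (continuous_subtype_val.comp continuous_fst)))

/-- Joint meridian map. -/
def meridF (f : C(Sph (m + 2), ℝ)) : C(Sph (m + 1) × IccPi, ℝ) :=
  ⟨fun p => f (phi p.2.1 p.1), f.continuous.comp continuous_phi2⟩

lemma continuous_merid (f : C(Sph (m + 2), ℝ)) : Continuous (merid (m := m) f) := by
  have : merid (m := m) f = fun y => (meridF f).curry y := by
    funext y; ext t; rfl
  rw [this]
  exact (meridF f).curry.continuous

lemma phi_zero (y : Sph (m + 1)) : phi 0 y = npole (m + 1) := by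
  apply Subtype.ext
  ext j
  refine Fin.lastCases ?_ ?_ j
  · simp [phi, npole, Fin.snoc_last, WithLp.equiv_symm_apply, PiLp.toLp_apply, EuclideanSpace.single_apply]
  · intro i
    simp [phi, npole, Fin.snoc_castSucc, WithLp.equiv_symm_apply, PiLp.toLp_apply,
      EuclideanSpace.single_apply, Fin.castSucc_lt_last i |>.ne]

lemma phi_pi (y : Sph (m + 1)) : phi π y = spole (m + 1) := by
  apply Subtype.ext
  ext j
  refine Fin.lastCases ?_ ?_ j
  · simp [phi, spole, Fin.snoc_last, WithLp.equiv_symm_apply, PiLp.toLp_apply, EuclideanSpace.single_apply]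
  · intro i
    simp [phi, spole, Fin.snoc_castSucc, WithLp.equiv_symm_apply, PiLp.toLp_apply,
      EuclideanSpace.single_apply, Fin.castSucc_lt_last i |>.ne]

lemma merid_lo (f : C(Sph (m + 2), ℝ)) (y : Sph (m + 1)) :
    merid f y loPt = f (npole (m + 1)) := by
  simp only [merid, ContinuousMap.coe_mk, loPt, phi_zero]

lemma merid_hi (f : C(Sph (m + 2), ℝ)) (y : Sph (m + 1)) :
    merid f y hiPt = f (spole (m + 1)) := by
  simp only [merid, ContinuousMap.coe_mk, hiPt, phi_pi]

end LatOpAux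

section LatOpAux2

variable {m : ℕ}

lemma npole_last : (npole (m + 1)).1 (Fin.last (m + 1)) = 1 := by
  simp [npole, EuclideanSpace.single_apply]

lemma spole_last : (spole (m + 1)).1 (Fin.last (m + 1)) = -1 := by
  simp [spole, EuclideanSpace.single_apply]

lemma latPt_npole : latPt (npole (m + 1)) = loPt := by
  apply Subtype.ext
  simp [latPt, lat, npole_last, loPt, Real.arccos_one]

lemma latPt_spole : latPt (spole (m + 1)) = hiPt := by
  apply Subtype.ext
  simp [latPt, lat, spole_last, hiPt, Real.arccos_neg_one]

lemma eqpart_apply (ξ : Sph (m + 2)) (i : Fin (m + 1)) : eqpart ξ i = ξ.1 i.castSucc := rfl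

lemma eqpart_eq_zero_iff (ξ : Sph (m + 2)) :
    eqpart ξ = 0 ↔ ξ = npole (m + 1) ∨ ξ = spole (m + 1) := by
  constructor
  · intro h0
    have hc : ∀ i : Fin (m + 1), ξ.1 i.castSucc = 0 := by
      intro i
      have := congrFun (congrArg (WithLp.equiv 2 (Fin (m + 1) → ℝ)) h0) i
      simpa [eqpart] using this
    have hsum := sphere_sum_sq ξ
    rw [Fin.sum_univ_castSucc] at hsum
    have hz : ∑ i : Fin (m + 1), (ξ.1 i.castSucc) ^ 2 = 0 := by
      apply Finset.sum_eq_zero; intro i _; rw [hc i]; ring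
    have hlast : (ξ.1 (Fin.last (m + 1))) ^ 2 = 1 := by linarith
    have : (ξ.1 (Fin.last (m + 1)) - 1) * (ξ.1 (Fin.last (m + 1)) + 1) = 0 := by nlinarith
    rcases mul_eq_zero.mp this with h | h
    · left
      apply Subtype.ext
      ext j
      refine Fin.lastCases ?_ ?_ j
      · rw [npole_last]; linarith
      · intro i
        rw [hc i]
        simp [npole, EuclideanSpace.single_apply, (Fin.castSucc_lt_last i).ne]
    · right
      apply Subtype.ext
      ext j
      refine Fin.lastCases ?_ ?_ j
      · rw [spole_last]; linarith
      · intro i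
        rw [hc i]
        simp [spole, EuclideanSpace.single_apply, (Fin.castSucc_lt_last i).ne]
  · rintro (rfl | rfl) <;>
    · apply (WithLp.equiv 2 (Fin (m + 1) → ℝ)).injective
      funext i
      simp [eqpart, npole, spole, EuclideanSpace.single_apply, (Fin.castSucc_lt_last i).ne]

lemma ydir_npole : ydir (npole (m + 1)) = npole m := by
  rw [ydir, dif_pos ((eqpart_eq_zero_iff _).mpr (Or.inl rfl))]

lemma ydir_spole : ydir (spole (m + 1)) = npole m := by
  rw [ydir, dif_pos ((eqpart_eq_zero_iff _).mpr (Or.inr rfl))]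

lemma continuousAt_ydir {ξ0 : Sph (m + 2)} (h : eqpart ξ0 ≠ 0) :
    ContinuousAt (ydir (m := m)) ξ0 := by
  rw [Topology.IsInducing.subtypeVal.continuousAt_iff]
  have hopen : IsOpen {ξ : Sph (m + 2) | eqpart ξ ≠ 0} :=
    isOpen_compl_singleton.preimage continuous_eqpart
  have hev : ∀ᶠ ξ in nhds ξ0, (fun ξ => ((ydir ξ : Sph (m + 1)) : Eucl (m + 1))) ξ =
      (fun ξ : Sph (m + 2) => ‖eqpart ξ‖⁻¹ • eqpart ξ) ξ := by
    filter_upwards [hopen.mem_nhds h] with ξ hξ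
    rw [ydir, dif_neg hξ]
  refine ContinuousAt.congr ?_ (Filter.EventuallyEq.symm hev)
  exact ((continuous_eqpart.norm.continuousAt).inv₀ (norm_ne_zero_iff.mpr h)).smul
    continuous_eqpart.continuousAt

end LatOpAux2

/-- `k = m + 1 ≥ 2`: if `P : C[0,π] → C[0,π]` is continuous linear and preserves
`C₀[0,π]`, then the latitudinal operator `P^#` maps `C(S^k)` into `C(S^k)`. -/
theorem latitudinal_operator_preserves_continuity
    (m : ℕ) (hm : 1 ≤ m)
    (P : C(IccPi, ℝ) →L[ℝ] C(IccPi, ℝ))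
    (hP : ∀ g : C(IccPi, ℝ), g loPt = 0 → g hiPt = 0 → P g loPt = 0 ∧ P g hiPt = 0)
    (f : C(Sph (m + 2), ℝ)) :
    Continuous (latOp P f) := by
  classical
  set h : C(IccPi, ℝ) := merid f (npole m) with hh
  set G : Sph (m + 1) × IccPi → ℝ := fun p => P (merid f p.1 - h) p.2 with hGdef
  have hmeridsub : Continuous fun y : Sph (m + 1) => merid f y - h :=
    (continuous_merid f).sub continuous_const
  have hGcont : Continuous G := by
    have h1 : Continuous fun p : Sph (m + 1) × IccPi => P (merid f p.1 - h) :=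
      P.continuous.comp (hmeridsub.comp continuous_fst)
    exact h1.eval continuous_snd
  have hmem : ∀ y : Sph (m + 1), (merid f y - h) loPt = 0 ∧ (merid f y - h) hiPt = 0 := by
    intro y
    constructor <;> simp [ContinuousMap.sub_apply, merid_lo, merid_hi, hh]
  have hG0 : ∀ y : Sph (m + 1), G (y, loPt) = 0 :=
    fun y => (hP _ (hmem y).1 (hmem y).2).1
  have hGpi : ∀ y : Sph (m + 1), G (y, hiPt) = 0 :=
    fun y => (hP _ (hmem y).1 (hmem y).2).2
  have hdecomp : latOp P f = fun ξ => G (ydir ξ, latPt ξ) + P h (latPt ξ) := by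
    funext ξ
    have : latOp P f ξ = P (merid f (ydir ξ)) (latPt ξ) := rfl
    rw [this, hGdef]
    simp only [map_sub, ContinuousMap.sub_apply]
    ring
  rw [hdecomp]
  have hsecond : Continuous fun ξ : Sph (m + 2) => P h (latPt ξ) :=
    (P h).continuous.comp continuous_latPt
  refine Continuous.add ?_ hsecond
  -- continuity of the first term
  have hGu : UniformContinuous G := CompactSpace.uniformContinuous_of_continuous hGcont
  rw [continuous_iff_continuousAt]
  intro ξ0
  by_cases hz : eqpart ξ0 = 0
  · -- pole case
    rcases (eqpart_eq_zero_iff ξ0).mp hz with rfl | rfl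
    · -- north pole
      have hval : G (ydir (npole (m + 1)), latPt (npole (m + 1))) = 0 := by
        rw [latPt_npole]; exact hG0 _
      rw [ContinuousAt, hval, Metric.tendsto_nhds]
      intro ε hε
      obtain ⟨δ, hδ, hδG⟩ := Metric.uniformContinuous_iff.mp hGu ε hε
      have hlat : ∀ᶠ ξ in nhds (npole (m + 1)), dist (latPt ξ) loPt < δ := by
        have := (continuous_latPt.tendsto (npole (m + 1)))
        rw [latPt_npole] at this
        exact this (Metric.ball_mem_nhds _ hδ)
      filter_upwards [hlat] with ξ hξ
      have heq : G (ydir ξ, loPt) = 0 := hG0 _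
      calc dist (G (ydir ξ, latPt ξ)) 0
          = dist (G (ydir ξ, latPt ξ)) (G (ydir ξ, loPt)) := by rw [heq]
        _ < ε := by
            apply hδG
            simp only [Prod.dist_eq, dist_self]
            exact max_lt hδ hξ
    · -- south pole
      have hval : G (ydir (spole (m + 1)), latPt (spole (m + 1))) = 0 := by
        rw [latPt_spole]; exact hGpi _
      rw [ContinuousAt, hval, Metric.tendsto_nhds]
      intro ε hε
      obtain ⟨δ, hδ, hδG⟩ := Metric.uniformContinuous_iff.mp hGu ε hε
      have hlat : ∀ᶠ ξ in nhds (spole (m + 1)), dist (latPt ξ) hiPt < δ := by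
        have := (continuous_latPt.tendsto (spole (m + 1)))
        rw [latPt_spole] at this
        exact this (Metric.ball_mem_nhds _ hδ)
      filter_upwards [hlat] with ξ hξ
      have heq : G (ydir ξ, hiPt) = 0 := hGpi _
      calc dist (G (ydir ξ, latPt ξ)) 0
          = dist (G (ydir ξ, latPt ξ)) (G (ydir ξ, hiPt)) := by rw [heq]
        _ < ε := by
            apply hδG
            simp only [Prod.dist_eq, dist_self]
            exact max_lt hδ hξ
  · exact hGcont.continuousAt.comp
      ((continuousAt_ydir hz).prodMk continuous_latPt.continuousAt)

end
end

section
/- Fix k ≥ 2. Let P : C(S^{k-1}) → C(S^{k-1}) be a continuous linear operator and c a constant such that ∫_{SO(k)} (T_a ∘ P ∘ T_{a^{-1}}) h(ξ) dμ_k(a) = c · h(ξ) for every h ∈ C(S^{k-1}) and ξ ∈ S^{k-1}. Let ι : SO(k) → SO(k+1) be the embedding sending a to the block-diagonal matrix diag(a, 1), so that ι(SO(k)) is the stabilizer of the north pole 1^k. Then for every h ∈ C₀(S^k) (continuous on S^k with h(1^k) = h(−1^k) = 0) and every ζ ∈ S^k, ∫_{SO(k)} (T_{ι(a)} ∘ P̂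 ∘ T_{ι(a)^{-1}}) h(ζ) dμ_k(a) = c · h(ζ). -/
open MeasureTheory Matrix Metric Real
open scoped RealInnerProductSpace ENNReal
noncomputable section

/-- The block-diagonal matrix `diag(A, 1)`. -/
def iotaMat {m : ℕ} (A : Matrix (Fin (m + 1)) (Fin (m + 1)) ℝ) :
    Matrix (Fin (m + 2)) (Fin (m + 2)) ℝ :=
  Matrix.reindex (finSumFinEquiv : Fin (m + 1) ⊕ Fin 1 ≃ Fin (m + 2))
    (finSumFinEquiv : Fin (m + 1) ⊕ Fin 1 ≃ Fin (m + 2))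
    (Matrix.fromBlocks A 0 0 (1 : Matrix (Fin 1) (Fin 1) ℝ))

lemma iotaMat_mem {m : ℕ} (A : Matrix (Fin (m + 1)) (Fin (m + 1)) ℝ)
    (hA : A ∈ Matrix.orthogonalGroup (Fin (m + 1)) ℝ) :
    iotaMat A ∈ Matrix.orthogonalGroup (Fin (m + 2)) ℝ := by
  rw [Matrix.mem_orthogonalGroup_iff] at hA ⊢
  unfold iotaMat
  rw [Matrix.reindex_apply, Matrix.transpose_submatrix,
    Matrix.submatrix_mul_equiv, Matrix.fromBlocks_transpose, Matrix.fromBlocks_multiply]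
  simp only [Matrix.mul_zero, Matrix.zero_mul, add_zero, zero_add, hA,
    Matrix.transpose_zero, Matrix.mul_one, Matrix.one_mul]
  rw [show (1 : Matrix (Fin 1) (Fin 1) ℝ)ᵀ = 1 by simp]
  rw [Matrix.fromBlocks_one, Matrix.submatrix_one_equiv]
lemma iotaMat_det {m : ℕ} (A : Matrix (Fin (m + 1)) (Fin (m + 1)) ℝ) (hA : A.det = 1) :
    (iotaMat A).det = 1 := by
  unfold iotaMat
  rw [Matrix.reindex_apply, Matrix.det_submatrix_equiv_self, Matrix.det_fromBlocks_zero₂₁,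
    hA, Matrix.det_one, mul_one]

/-- The embedding `ι : SO(k) → SO(k+1)`, `a ↦ diag(a, 1)`, onto the stabilizer of the
north pole. -/
def iota {m : ℕ} (a : SOg (m + 1)) : SOg (m + 2) :=
  ⟨⟨iotaMat a.mat, iotaMat_mem a.mat (a : ↥(Matrix.orthogonalGroup (Fin (m + 1)) ℝ)).2⟩,
    iotaMat_det a.mat a.2⟩

-- auxiliary lemmas
lemma finSumFinEquiv_symm_castSucc' {m : ℕ} (i : Fin (m+1)) :
    (finSumFinEquiv (m := m+1) (n := 1)).symm i.castSucc = Sum.inl i := by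
  rw [Equiv.symm_apply_eq]; rfl

lemma finSumFinEquiv_symm_last' {m : ℕ} :
    (finSumFinEquiv (m := m+1) (n := 1)).symm (Fin.last (m+1)) = Sum.inr 0 := by
  rw [Equiv.symm_apply_eq]; exact Fin.ext (by simp [Fin.natAdd])

lemma iotaMat_mulVec {m : ℕ} (A : Matrix (Fin (m+1)) (Fin (m+1)) ℝ) (v : Fin (m+2) → ℝ) :
    (iotaMat A).mulVec v =
      Fin.snoc (A.mulVec (fun i => v i.castSucc)) (v (Fin.last (m+1))) := by
  funext j
  refine Fin.lastCases ?_ ?_ j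
  · rw [Fin.snoc_last]
    simp only [Matrix.mulVec, dotProduct, iotaMat, Matrix.reindex_apply,
      Matrix.submatrix_apply, finSumFinEquiv_symm_last']
    rw [Fin.sum_univ_castSucc]
    simp [finSumFinEquiv_symm_castSucc', finSumFinEquiv_symm_last']
  · intro i
    rw [Fin.snoc_castSucc]
    simp only [Matrix.mulVec, dotProduct, iotaMat, Matrix.reindex_apply,
      Matrix.submatrix_apply, finSumFinEquiv_symm_castSucc']
    rw [Fin.sum_univ_castSucc]
    simp [finSumFinEquiv_symm_castSucc', finSumFinEquiv_symm_last']
lemma SOg.mat_mul {d : ℕ} (a b : SOg d) : (a * b).mat = a.mat * b.mat := rfl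

lemma iotaMat_mul {m : ℕ} (A B : Matrix (Fin (m+1)) (Fin (m+1)) ℝ) :
    iotaMat A * iotaMat B = iotaMat (A * B) := by
  unfold iotaMat
  rw [Matrix.reindex_apply, Matrix.reindex_apply, Matrix.reindex_apply,
    Matrix.submatrix_mul_equiv, Matrix.fromBlocks_multiply]
  simp

lemma iotaMat_one {m : ℕ} : iotaMat (1 : Matrix (Fin (m+1)) (Fin (m+1)) ℝ) = 1 := by
  unfold iotaMat
  rw [Matrix.reindex_apply, Matrix.fromBlocks_one, Matrix.submatrix_one_equiv]

lemma iota_mul {m : ℕ} (a b : SOg (m+1)) : iota (a * b) = iota a * iota b := by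
  apply Subtype.ext; apply Subtype.ext
  show iotaMat (a * b).mat = iotaMat a.mat * iotaMat b.mat
  rw [SOg.mat_mul, iotaMat_mul]

lemma iota_one {m : ℕ} : iota (1 : SOg (m+1)) = 1 := by
  apply Subtype.ext; apply Subtype.ext
  show iotaMat (1 : SOg (m+1)).mat = 1
  rw [show (1 : SOg (m+1)).mat = 1 from rfl, iotaMat_one]

lemma iota_inv {m : ℕ} (a : SOg (m+1)) : (iota a)⁻¹ = iota a⁻¹ := by
  apply inv_eq_of_mul_eq_one_right
  rw [← iota_mul, mul_inv_cancel, iota_one]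

lemma rot_mul {d : ℕ} (b c : SOg d) (x : Sph d) : rot (b * c) x = rot b (rot c x) := by
  apply Subtype.ext
  show _ = (WithLp.equiv 2 (Fin d → ℝ)).symm (b.mat.mulVec ((WithLp.equiv 2 (Fin d → ℝ)) _))
  simp only [rot, Equiv.apply_symm_apply, SOg.mat_mul, Matrix.mulVec_mulVec]

lemma rot_one {d : ℕ} (x : Sph d) : rot (1 : SOg d) x = x := by
  apply Subtype.ext
  show (WithLp.equiv 2 (Fin d → ℝ)).symm ((1 : SOg d).mat.mulVec ((WithLp.equiv 2 (Fin d → ℝ)) x.1)) = x.1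
  rw [show (1 : SOg d).mat = 1 from rfl, Matrix.one_mulVec]
  exact (WithLp.equiv 2 (Fin d → ℝ)).symm_apply_apply x.1

lemma rot_inv_rot {d : ℕ} (b : SOg d) (x : Sph d) : rot b⁻¹ (rot b x) = x := by
  rw [← rot_mul, inv_mul_cancel, rot_one]
lemma rot_iota_coord {m : ℕ} (g : SOg (m+1)) (ξ : Sph (m+2)) :
    (rot (iota g) ξ).1 =
      (WithLp.equiv 2 (Fin (m+2) → ℝ)).symm
        (Fin.snoc (g.mat.mulVec (fun i => ξ.1 i.castSucc)) (ξ.1 (Fin.last (m+1)))) := by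
  show (WithLp.equiv 2 (Fin (m+2) → ℝ)).symm ((iota g).mat.mulVec _) = _
  congr 1
  rw [show (iota g).mat = iotaMat g.mat from rfl, iotaMat_mulVec]
  rfl

lemma rot_iota_last {m : ℕ} (g : SOg (m+1)) (ξ : Sph (m+2)) :
    (rot (iota g) ξ).1 (Fin.last (m+1)) = ξ.1 (Fin.last (m+1)) := by
  rw [rot_iota_coord, WithLp.equiv_symm_apply, PiLp.toLp_apply, Fin.snoc_last]

lemma rot_iota_castSucc {m : ℕ} (g : SOg (m+1)) (ξ : Sph (m+2)) (i : Fin (m+1)) :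
    (rot (iota g) ξ).1 i.castSucc = g.mat.mulVec (fun i' => ξ.1 i'.castSucc) i := by
  rw [rot_iota_coord, WithLp.equiv_symm_apply, PiLp.toLp_apply, Fin.snoc_castSucc]

lemma lat_rot_iota {m : ℕ} (g : SOg (m+1)) (ξ : Sph (m+2)) :
    lat (rot (iota g) ξ) = lat ξ := by
  unfold lat; rw [rot_iota_last]

lemma rot_iota_npole {m : ℕ} (g : SOg (m+1)) : rot (iota g) (npole (m+1)) = npole (m+1) := by
  apply Subtype.ext
  ext j
  refine Fin.lastCases ?_ ?_ j
  · rw [rot_iota_last]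
  · intro i
    rw [rot_iota_castSucc]
    have hz : (fun i' : Fin (m+1) => (npole (m+1)).1 i'.castSucc) = 0 := by
      funext i'
      show EuclideanSpace.single (Fin.last (m+1)) (1:ℝ) i'.castSucc = 0
      rw [EuclideanSpace.single_apply, if_neg (Fin.castSucc_lt_last i').ne]
    rw [hz, Matrix.mulVec_zero]
    show (0:ℝ) = EuclideanSpace.single (Fin.last (m+1)) (1:ℝ) i.castSucc
    rw [EuclideanSpace.single_apply, if_neg (Fin.castSucc_lt_last i).ne]

lemma rot_iota_spole {m : ℕ} (g : SOg (m+1)) : rot (iota g) (spole (m+1)) = spole (m+1) := by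
  apply Subtype.ext
  ext j
  refine Fin.lastCases ?_ ?_ j
  · rw [rot_iota_last]
  · intro i
    rw [rot_iota_castSucc]
    have hz : (fun i' : Fin (m+1) => (spole (m+1)).1 i'.castSucc) = 0 := by
      funext i'
      show EuclideanSpace.single (Fin.last (m+1)) (-1:ℝ) i'.castSucc = 0
      rw [EuclideanSpace.single_apply, if_neg (Fin.castSucc_lt_last i').ne]
    rw [hz, Matrix.mulVec_zero]
    show (0:ℝ) = EuclideanSpace.single (Fin.last (m+1)) (-1:ℝ) i.castSucc
    rw [EuclideanSpace.single_apply, if_neg (Fin.castSucc_lt_last i).ne]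
lemma norm_mulVec_eucl {d : ℕ} (b : SOg d) (w : Eucl d) :
    ‖(WithLp.equiv 2 (Fin d → ℝ)).symm (b.mat.mulVec ((WithLp.equiv 2 (Fin d → ℝ)) w))‖ = ‖w‖ := by
  have key : ∀ u : Eucl d,
      ‖u‖ ^ 2 = (WithLp.equiv 2 (Fin d → ℝ)) u ⬝ᵥ (WithLp.equiv 2 (Fin d → ℝ)) u := by
    intro u
    rw [EuclideanSpace.norm_eq, Real.sq_sqrt (by positivity)]
    simp [dotProduct, sq_abs, pow_two]
  set v : Fin d → ℝ := (WithLp.equiv 2 (Fin d → ℝ)) w with hv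
  have hdot : (b.mat.mulVec v) ⬝ᵥ (b.mat.mulVec v) = v ⬝ᵥ v := by
    rw [dotProduct_mulVec, ← Matrix.mulVec_transpose, Matrix.mulVec_mulVec, SOg.matT_mul,
      Matrix.one_mulVec]
  have h1 : ‖(WithLp.equiv 2 (Fin d → ℝ)).symm (b.mat.mulVec v)‖ ^ 2 = ‖w‖ ^ 2 := by
    rw [key, Equiv.apply_symm_apply, hdot, ← key]
  have := norm_nonneg ((WithLp.equiv 2 (Fin d → ℝ)).symm (b.mat.mulVec v))
  nlinarith [norm_nonneg w]

lemma eqpart_rot_iota {m : ℕ} (g : SOg (m+1)) (ξ : Sph (m+2)) :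
    eqpart (rot (iota g) ξ) =
      (WithLp.equiv 2 (Fin (m+1) → ℝ)).symm
        (g.mat.mulVec ((WithLp.equiv 2 (Fin (m+1) → ℝ)) (eqpart ξ))) := by
  unfold eqpart
  congr 1
  funext i
  rw [rot_iota_castSucc]
  rfl

lemma ydir_rot_iota {m : ℕ} (g : SOg (m+1)) (ξ : Sph (m+2)) (he : eqpart ξ ≠ 0) :
    ydir (rot (iota g) ξ) = rot g (ydir ξ) := by
  have hnorm : ‖eqpart (rot (iota g) ξ)‖ = ‖eqpart ξ‖ := by
    rw [eqpart_rot_iota]; exact norm_mulVec_eucl g (eqpart ξ)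
  have he' : eqpart (rot (iota g) ξ) ≠ 0 := by
    intro h0
    apply he
    rw [← norm_eq_zero, ← hnorm, h0, norm_zero]
  unfold ydir
  rw [dif_neg he', dif_neg he]
  apply Subtype.ext
  show ‖eqpart (rot (iota g) ξ)‖⁻¹ • eqpart (rot (iota g) ξ)
    = (WithLp.equiv 2 (Fin (m+1) → ℝ)).symm (g.mat.mulVec ((WithLp.equiv 2 (Fin (m+1) → ℝ))
        (‖eqpart ξ‖⁻¹ • eqpart ξ)))
  rw [hnorm, eqpart_rot_iota]
  ext i
  show ‖eqpart ξ‖⁻¹ * (g.mat.mulVec ((WithLp.equiv 2 (Fin (m+1) → ℝ)) (eqpart ξ))) i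
    = (g.mat.mulVec (‖eqpart ξ‖⁻¹ • ((WithLp.equiv 2 (Fin (m+1) → ℝ)) (eqpart ξ)))) i
  rw [Matrix.mulVec_smul]
  rfl
lemma phi_last {m : ℕ} (t : ℝ) (y : Sph (m+1)) :
    (phi t y).1 (Fin.last (m+1)) = Real.cos t := by
  simp only [phi]
  rw [WithLp.equiv_symm_apply, PiLp.toLp_apply, Fin.snoc_last]

lemma phi_castSucc {m : ℕ} (t : ℝ) (y : Sph (m+1)) (i : Fin (m+1)) :
    (phi t y).1 i.castSucc = Real.sin t * y.1 i := by
  simp only [phi]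
  rw [WithLp.equiv_symm_apply, PiLp.toLp_apply, Fin.snoc_castSucc]
  rfl

lemma npole_coe {m : ℕ} (j : Fin (m+2)) :
    (npole (m+1)).1 j = if j = Fin.last (m+1) then (1:ℝ) else 0 := by
  show EuclideanSpace.single (Fin.last (m+1)) (1:ℝ) j = _
  rw [EuclideanSpace.single_apply]

lemma spole_coe {m : ℕ} (j : Fin (m+2)) :
    (spole (m+1)).1 j = if j = Fin.last (m+1) then (-1:ℝ) else 0 := by
  show EuclideanSpace.single (Fin.last (m+1)) (-1:ℝ) j = _
  rw [EuclideanSpace.single_apply]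

lemma eqpart_zero_pole {m : ℕ} (ζ : Sph (m+2)) (he : eqpart ζ = 0) :
    ζ = npole (m+1) ∨ ζ = spole (m+1) := by
  have hco : ∀ i : Fin (m+1), ζ.1 i.castSucc = 0 := by
    intro i
    have := congrFun (congrArg (WithLp.equiv 2 (Fin (m+1) → ℝ)) he) i
    simpa [eqpart] using this
  have hsum := sphere_sum_sq ζ
  rw [Fin.sum_univ_castSucc] at hsum
  simp only [hco] at hsum
  have hlast : ζ.1 (Fin.last (m+1)) ^ 2 = 1 := by simpa using hsum
  have hfac : (ζ.1 (Fin.last (m+1)) - 1) * (ζ.1 (Fin.last (m+1)) + 1) = 0 := by nlinarith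
  rcases mul_eq_zero.mp hfac with hv | hv
  · left
    apply Subtype.ext
    ext j
    refine Fin.lastCases ?_ ?_ j
    · rw [npole_coe, if_pos rfl]; linarith
    · intro i
      rw [npole_coe, if_neg (Fin.castSucc_lt_last i).ne]
      exact hco i
  · right
    apply Subtype.ext
    ext j
    refine Fin.lastCases ?_ ?_ j
    · rw [spole_coe, if_pos rfl]; linarith
    · intro i
      rw [spole_coe, if_neg (Fin.castSucc_lt_last i).ne]
      exact hco i

lemma phi_lat_ydir {m : ℕ} (ζ : Sph (m+2)) (he : eqpart ζ ≠ 0) :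
    phi (lat ζ) (ydir ζ) = ζ := by
  set x : ℝ := ζ.1 (Fin.last (m+1)) with hx
  have hsum := sphere_sum_sq ζ
  rw [Fin.sum_univ_castSucc] at hsum
  have hsq : (∑ i : Fin (m+1), ζ.1 i.castSucc ^ 2) = 1 - x ^ 2 := by
    rw [hx]; linarith
  have hnn : 0 ≤ ∑ i : Fin (m+1), ζ.1 i.castSucc ^ 2 :=
    Finset.sum_nonneg fun i _ => sq_nonneg _
  have hx1 : -1 ≤ x ∧ x ≤ 1 := by constructor <;> nlinarith
  have hnorm : ‖eqpart ζ‖ = Real.sqrt (1 - x ^ 2) := by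
    rw [EuclideanSpace.norm_eq]
    congr 1
    rw [← hsq]
    refine Finset.sum_congr rfl fun i _ => ?_
    rw [Real.norm_eq_abs, sq_abs]
    rfl
  have hpos : 0 < ‖eqpart ζ‖ := norm_pos_iff.mpr he
  apply Subtype.ext
  ext j
  refine Fin.lastCases ?_ ?_ j
  · rw [phi_last]
    exact Real.cos_arccos hx1.1 hx1.2
  · intro i
    rw [phi_castSucc]
    have hy : (ydir ζ).1 i = ‖eqpart ζ‖⁻¹ * ζ.1 i.castSucc := by
      unfold ydir
      rw [dif_neg he]
      rfl
    rw [hy]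
    have hsin : Real.sin (lat ζ) = Real.sqrt (1 - x ^ 2) := by
      unfold lat
      rw [Real.sin_arccos]
    rw [hsin, hnorm]
    have hs : Real.sqrt (1 - x ^ 2) ≠ 0 := by rw [← hnorm]; exact hpos.ne'
    field_simp

lemma rot_iota_phi {m : ℕ} (g : SOg (m+1)) (t : ℝ) (y : Sph (m+1)) :
    rot (iota g) (phi t y) = phi t (rot g y) := by
  apply Subtype.ext
  ext j
  refine Fin.lastCases ?_ ?_ j
  · rw [rot_iota_last, phi_last, phi_last]
  · intro i
    rw [rot_iota_castSucc, phi_castSucc]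
    have h1 : (fun i' : Fin (m+1) => (phi t y).1 i'.castSucc)
        = Real.sin t • (fun i' => y.1 i') := by
      funext i'
      rw [phi_castSucc]
      rfl
    rw [h1, Matrix.mulVec_smul]
    rfl

lemma ringSlice_comp {m : ℕ} (h : C(Sph (m+2), ℝ)) (g : SOg (m+1)) (t : ℝ) :
    ringSlice (h.comp (rotCM (iota g))) t = (ringSlice h t).comp (rotCM g) := by
  apply ContinuousMap.ext
  intro y
  show h (rot (iota g) (phi t y)) = h (phi t (rot g y))
  rw [rot_iota_phi]
/-- `k = m + 1 ≥ 2`: averaging the conjugates of the lifted operator `P̂` over the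
stabilizer `ι(SO(k))` of the north pole reproduces `c · Id` on functions vanishing at the
poles. -/
theorem stabilizer_average_of_lifted_operator
    (m : ℕ) (hm : 1 ≤ m)
    (P : C(Sph (m + 1), ℝ) →L[ℝ] C(Sph (m + 1), ℝ)) (c : ℝ)
    (μk : Measure (SOg (m + 1))) [IsProbabilityMeasure μk]
    (hμk : ∀ g : SOg (m + 1), MeasurePreserving (fun b => g * b) μk μk)
    (hP : ∀ (h : C(Sph (m + 1), ℝ)) (ξ : Sph (m + 1)),
      ∫ a : SOg (m + 1), (P (h.comp (rotCM a))) (rot a⁻¹ ξ) ∂μk = c * h ξ)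
    (h : C(Sph (m + 2), ℝ)) (h0 : h (npole (m + 1)) = 0) (hπ : h (spole (m + 1)) = 0)
    (ζ : Sph (m + 2)) :
    ∫ a : SOg (m + 1), hatOp P (⇑(h.comp (rotCM (iota a)))) (rot (iota a)⁻¹ ζ) ∂μk
      = c * h ζ := by
  by_cases hp : ζ = npole (m + 1) ∨ ζ = spole (m + 1)
  · have hz : ∀ a : SOg (m + 1),
        hatOp P (⇑(h.comp (rotCM (iota a)))) (rot (iota a)⁻¹ ζ) = 0 := by
      intro a
      rw [iota_inv]
      rcases hp with hp | hp
      · rw [hp, rot_iota_npole]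
        unfold hatOp
        rw [if_pos (Or.inl rfl)]
      · rw [hp, rot_iota_spole]
        unfold hatOp
        rw [if_pos (Or.inr rfl)]
    calc ∫ a : SOg (m + 1), hatOp P (⇑(h.comp (rotCM (iota a)))) (rot (iota a)⁻¹ ζ) ∂μk
        = ∫ _ : SOg (m + 1), (0:ℝ) ∂μk := by
          congr 1
          funext a
          exact hz a
      _ = 0 := integral_zero _ _
      _ = c * h ζ := by
          rcases hp with hp | hp
          · rw [hp, h0, mul_zero]
          · rw [hp, hπ, mul_zero]
  · push_neg at hp
    obtain ⟨hn, hs⟩ := hp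
    have he : eqpart ζ ≠ 0 := fun h' => by
      rcases eqpart_zero_pole ζ h' with h'' | h''
      · exact hn h''
      · exact hs h''
    have key : ∀ a : SOg (m + 1),
        hatOp P (⇑(h.comp (rotCM (iota a)))) (rot (iota a)⁻¹ ζ)
          = P ((ringSlice h (lat ζ)).comp (rotCM a)) (rot a⁻¹ (ydir ζ)) := by
      intro a
      rw [iota_inv]
      have hnp : ¬(rot (iota a⁻¹) ζ = npole (m + 1) ∨ rot (iota a⁻¹) ζ = spole (m + 1)) := by
        rintro (hq | hq)
        · apply hn
          have := congrArg (rot (iota a⁻¹)⁻¹) hq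
          rw [rot_inv_rot, iota_inv, rot_iota_npole] at this
          exact this
        · apply hs
          have := congrArg (rot (iota a⁻¹)⁻¹) hq
          rw [rot_inv_rot, iota_inv, rot_iota_spole] at this
          exact this
      unfold hatOp
      rw [if_neg hnp, dif_pos (h.comp (rotCM (iota a))).continuous]
      rw [show (⟨⇑(h.comp (rotCM (iota a))), (h.comp (rotCM (iota a))).continuous⟩
          : C(Sph (m + 2), ℝ)) = h.comp (rotCM (iota a)) from rfl]
      rw [lat_rot_iota, ydir_rot_iota _ _ he, ringSlice_comp]
    calc ∫ a : SOg (m + 1), hatOp P (⇑(h.comp (rotCM (iota a)))) (rot (iota a)⁻¹ ζ) ∂μk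
        = ∫ a : SOg (m + 1), P ((ringSlice h (lat ζ)).comp (rotCM a)) (rot a⁻¹ (ydir ζ)) ∂μk := by
          congr 1
          funext a
          exact key a
      _ = c * (ringSlice h (lat ζ)) (ydir ζ) := hP _ _
      _ = c * h ζ := by
          have : (ringSlice h (lat ζ)) (ydir ζ) = h (phi (lat ζ) (ydir ζ)) := rfl
          rw [this, phi_lat_ydir ζ he]
end
end
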